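/- Let K be a compact Hausdorff space, B the open unit ball of the complex Banach space C(K), and f₀ ∈ B. Then the map T : B → B defined pointwise by T(f) = (f - f₀)/(1 - conj(f₀)·f) is biholomorphic: T maps B into B, is holomorphic (Fréchet differentiable in the complex sense) on B, and is a bijection of B onto B whose inverse S(f) = (f + f₀)/(1 + conj(f₀)·f) is holomorphic; moreover T(f₀) = 0. -/

import Mathlib

open Metric Filter Topology

namespace ClusterValue

variable (X : Type*) [NormedAddCommGroup X] [NormedSpace ℂ X]

/-- Membership in `A_u(B)`: analytic on the open unit ball, bounded there,
and uniformly continuous there. -/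
def MemAu (f : X → ℂ) : Prop :=
  AnalyticOn ℂ f (ball (0 : X) 1) ∧ (∃ C : ℝ, ∀ x ∈ ball (0 : X) 1, ‖f x‖ ≤ C) ∧
    UniformContinuousOn f (ball (0 : X) 1)

/-- Membership in `H^∞(B)`: analytic on the open unit ball and bounded there. -/
def MemHinf (f : X → ℂ) : Prop :=
  AnalyticOn ℂ f (ball (0 : X) 1) ∧ (∃ C : ℝ, ∀ x ∈ ball (0 : X) 1, ‖f x‖ ≤ C)

/-- A character (nonzero continuous multiplicative linear functional) of the algebra
of functions on the open unit ball of `X` determined by the membership predicate `Mem`.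
Functions are identified when they agree on the ball. -/
structure Character (Mem : (X → ℂ) → Prop) : Type _ where
  toFun : (X → ℂ) → ℂ
  congr' : ∀ f g, Mem f → Mem g → (∀ x ∈ ball (0 : X) 1, f x = g x) → toFun f = toFun g
  map_add' : ∀ f g, Mem f → Mem g → toFun (f + g) = toFun f + toFun g
  map_mul' : ∀ f g, Mem f → Mem g → toFun (f * g) = toFun f * toFun g
  map_smul' : ∀ (c : ℂ) (f), Mem f → toFun (c • f) = c * toFun f
  map_one' : toFun 1 = 1
  continuous' : ∃ C : ℝ, ∀ (f : X → ℂ) (M : ℝ), Mem f →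
    (∀ x ∈ ball (0 : X) 1, ‖f x‖ ≤ M) → ‖toFun f‖ ≤ C * M

variable {X}

/-- The fiber over `0`: characters annihilating all continuous linear functionals. -/
def Character.inFiberZero {Mem : (X → ℂ) → Prop} (τ : Character X Mem) : Prop :=
  ∀ φ : X →L[ℂ] ℂ, τ.toFun ⇑φ = 0

/-- The fiber over `x'' ∈ X**`. -/
def Character.inFiber {Mem : (X → ℂ) → Prop} (τ : Character X Mem)
    (x'' : (X →L[ℂ] ℂ) →L[ℂ] ℂ) : Prop :=
  ∀ φ : X →L[ℂ] ℂ, τ.toFun ⇑φ = x'' φ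

variable (X)

/-- The cluster set of `f` at `0`: limits of `f` along weakly null nets (filters) in the ball. -/
def clusterSetZero (f : X → ℂ) : Set ℂ :=
  {z | ∃ l : Filter X, l.NeBot ∧ l ≤ 𝓟 (ball (0 : X) 1) ∧
    (∀ φ : X →L[ℂ] ℂ, Tendsto (fun x => φ x) l (𝓝 0)) ∧ Tendsto f l (𝓝 z)}

/-- The cluster set of `f` at `x'' ∈ X**`: limits of `f` along nets in the ball converging
weak-star to `x''`. -/
def clusterSet (f : X → ℂ) (x'' : (X →L[ℂ] ℂ) →L[ℂ] ℂ) : Set ℂ :=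
  {z | ∃ l : Filter X, l.NeBot ∧ l ≤ 𝓟 (ball (0 : X) 1) ∧
    (∀ φ : X →L[ℂ] ℂ, Tendsto (fun x => φ x) l (𝓝 (x'' φ))) ∧ Tendsto f l (𝓝 z)}

/-- A finite rank (bounded linear) operator. -/
def FiniteRank (S : X →L[ℂ] X) : Prop :=
  FiniteDimensional ℂ ↥(LinearMap.range (S : X →ₗ[ℂ] X))

/-- Finite type polynomials: the subalgebra of functions generated by the
continuous linear functionals (and constants). -/
def IsFiniteTypePoly (p : X → ℂ) : Prop :=
  p ∈ Algebra.adjoin ℂ (Set.range fun φ : X →L[ℂ] ℂ => (⇑φ : X → ℂ))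

/-- Membership in `A(B)`: uniform limits on the ball of finite type polynomials. -/
def MemA (f : X → ℂ) : Prop :=
  ∀ ε > (0 : ℝ), ∃ p : X → ℂ, IsFiniteTypePoly X p ∧ ∀ x ∈ ball (0 : X) 1, ‖f x - p x‖ ≤ ε

/-- A continuous polynomial: a finite sum of (diagonals of) continuous multilinear maps. -/
def IsContPoly (p : X → ℂ) : Prop :=
  ∃ (N : ℕ) (M : ∀ k : ℕ, ContinuousMultilinearMap ℂ (fun _ : Fin k => X) ℂ),
    ∀ x, p x = ∑ k ∈ Finset.range N, M k (fun _ => x)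

end ClusterValue


private lemma one_sub_ne_zero' (x : ℂ) (h : ‖x‖ < 1) : 1 - x ≠ 0 := by
  intro e
  have : (1 : ℂ) = x := by rwa [sub_eq_zero] at e
  rw [← this] at h
  simp at h

private lemma mob_ne (a z : ℂ) (ha : ‖a‖ < 1) (hz : ‖z‖ < 1) :
    1 - (starRingEnd ℂ) a * z ≠ 0 := by
  refine one_sub_ne_zero' _ ?_
  have : ‖(starRingEnd ℂ) a * z‖ = ‖a‖ * ‖z‖ := by
    rw [norm_mul]; simp
  rw [this]
  nlinarith [norm_nonneg a, norm_nonneg z]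

private lemma mob_lt (a z : ℂ) (ha : ‖a‖ < 1) (hz : ‖z‖ < 1) :
    ‖(z - a) / (1 - (starRingEnd ℂ) a * z)‖ < 1 := by
  have hne := mob_ne a z ha hz
  rw [norm_div, div_lt_one (norm_pos_iff.mpr hne)]
  have key : Complex.normSq (1 - (starRingEnd ℂ) a * z) - Complex.normSq (z - a)
      = (1 - Complex.normSq a) * (1 - Complex.normSq z) := by
    simp [Complex.normSq_apply]; ring
  have ha2 : Complex.normSq a < 1 := by
    rw [← Complex.sq_norm]
    nlinarith [norm_nonneg a]
  have hz2 : Complex.normSq z < 1 := by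
    rw [← Complex.sq_norm]
    nlinarith [norm_nonneg z]
  have hlt : Complex.normSq (z - a) < Complex.normSq (1 - (starRingEnd ℂ) a * z) := by
    nlinarith
  have h1 : ‖z - a‖ ^ 2 < ‖1 - (starRingEnd ℂ) a * z‖ ^ 2 := by
    rw [Complex.sq_norm, Complex.sq_norm]
    exact hlt
  exact lt_of_pow_lt_pow_left₀ 2 (norm_nonneg _) h1

private lemma mob_inv (a z : ℂ) (ha : ‖a‖ < 1) (hz : ‖z‖ < 1) :
    ((z - a) / (1 - (starRingEnd ℂ) a * z) + a)
      / (1 + (starRingEnd ℂ) a * ((z - a) / (1 - (starRingEnd ℂ) a * z))) = z := by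
  have h1 := mob_ne a z ha hz
  have hD : 1 + (starRingEnd ℂ) a * ((z - a) / (1 - (starRingEnd ℂ) a * z))
      = (1 - (starRingEnd ℂ) a * a) / (1 - (starRingEnd ℂ) a * z) := by
    field_simp
    ring
  have hnum : 1 - (starRingEnd ℂ) a * a ≠ 0 := by
    refine one_sub_ne_zero' _ ?_
    have : ‖(starRingEnd ℂ) a * a‖ = ‖a‖ * ‖a‖ := by rw [norm_mul]; simp
    rw [this]; nlinarith [norm_nonneg a]
  have hDne : 1 + (starRingEnd ℂ) a * ((z - a) / (1 - (starRingEnd ℂ) a * z)) ≠ 0 := by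
    rw [hD]; exact div_ne_zero hnum h1
  have hnum' : 1 - a * (starRingEnd ℂ) a ≠ 0 := by rwa [mul_comm] at hnum
  rw [hD, div_add' _ _ _ h1, div_div_div_cancel_right₀ h1, div_eq_iff hnum]
  ring

private lemma cnorm_lt_one {K : Type*} [TopologicalSpace K] [CompactSpace K]
    (h : C(K, ℂ)) (hh : ∀ t, ‖h t‖ < 1) : ‖h‖ < 1 := by
  rcases isEmpty_or_nonempty K with hK | hK
  · have h0 : ‖h‖ ≤ 0 := (ContinuousMap.norm_le h le_rfl).2 (fun t => isEmptyElim t)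
    linarith
  · obtain ⟨t₀, -, ht₀⟩ := isCompact_univ.exists_isMaxOn Set.univ_nonempty
      ((h.continuous.norm).continuousOn (s := Set.univ))
    exact lt_of_le_of_lt
      ((ContinuousMap.norm_le h (norm_nonneg _)).2 fun t => ht₀ (Set.mem_univ t)) (hh t₀)

open Metric Filter Topology in
/-- For `f₀` in the open unit ball `B` of `C(K)`, the Möbius map
`T f = (f - f₀) / (1 - conj f₀ · f)` (pointwise) is a biholomorphism of `B` onto `B` with
holomorphic inverse `S f = (f + f₀) / (1 + conj f₀ · f)`, and `T f₀ = 0`. -/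
theorem statement14 (K : Type*) [TopologicalSpace K] [CompactSpace K] [T2Space K]
    (f₀ : C(K, ℂ)) (hf₀ : f₀ ∈ ball (0 : C(K, ℂ)) 1) :
    ∃ T S : C(K, ℂ) → C(K, ℂ),
      (∀ f ∈ ball (0 : C(K, ℂ)) 1, ∀ t : K,
        T f t = (f t - f₀ t) / (1 - (starRingEnd ℂ) (f₀ t) * f t)) ∧
      (∀ f ∈ ball (0 : C(K, ℂ)) 1, ∀ t : K,
        S f t = (f t + f₀ t) / (1 + (starRingEnd ℂ) (f₀ t) * f t)) ∧
      -- `T` maps `B` into `B`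
      Set.MapsTo T (ball (0 : C(K, ℂ)) 1) (ball (0 : C(K, ℂ)) 1) ∧
      -- `T` is holomorphic on `B` (Fréchet differentiable in the complex sense)
      (∀ f ∈ ball (0 : C(K, ℂ)) 1, DifferentiableAt ℂ T f) ∧
      -- `T` is a bijection of `B` onto `B`
      Set.BijOn T (ball (0 : C(K, ℂ)) 1) (ball (0 : C(K, ℂ)) 1) ∧
      -- the inverse `S` maps `B` into `B` and is holomorphic on `B`
      Set.MapsTo S (ball (0 : C(K, ℂ)) 1) (ball (0 : C(K, ℂ)) 1) ∧
      (∀ f ∈ ball (0 : C(K, ℂ)) 1, DifferentiableAt ℂ S f) ∧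
      -- `S` is inverse to `T`
      (∀ f ∈ ball (0 : C(K, ℂ)) 1, S (T f) = f) ∧
      (∀ f ∈ ball (0 : C(K, ℂ)) 1, T (S f) = f) ∧
      -- `T` sends `f₀` to `0`
      T f₀ = 0 := by
  have hf₀n : ‖f₀‖ < 1 := by rwa [mem_ball_zero_iff] at hf₀
  set g : C(K, ℂ) := star f₀ with hgdef
  have hgn : ‖g‖ = ‖f₀‖ := norm_star f₀
  have hgt : ∀ t, g t = (starRingEnd ℂ) (f₀ t) := fun t => rfl
  have hUn : ∀ h : C(K, ℂ), ‖h‖ < 1 → IsUnit (1 - g * h) := by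
    intro h hh
    have hlt : ‖g * h‖ < 1 := lt_of_le_of_lt (norm_mul_le _ _)
      (by rw [hgn]; nlinarith [norm_nonneg f₀, norm_nonneg h])
    exact (Units.oneSub _ hlt).isUnit
  have hUp : ∀ h : C(K, ℂ), ‖h‖ < 1 → IsUnit (1 + g * h) := by
    intro h hh
    have hlt : ‖-(g * h)‖ < 1 := by
      rw [norm_neg]
      exact lt_of_le_of_lt (norm_mul_le _ _)
        (by rw [hgn]; nlinarith [norm_nonneg f₀, norm_nonneg h])
    have h2 : IsUnit (1 - -(g * h)) := (Units.oneSub _ hlt).isUnit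
    rwa [sub_neg_eq_add] at h2
  have hinv : ∀ d : C(K, ℂ), IsUnit d → ∀ t, (Ring.inverse d) t = (d t)⁻¹ := by
    intro d hd t
    obtain ⟨u, rfl⟩ := hd
    rw [Ring.inverse_unit]
    refine (eq_inv_of_mul_eq_one_right ?_)
    rw [← ContinuousMap.mul_apply, u.mul_inv, ContinuousMap.one_apply]
  have hTap : ∀ f : C(K, ℂ), ‖f‖ < 1 → ∀ t : K,
      ((f - f₀) * Ring.inverse (1 - g * f)) t
        = (f t - f₀ t) / (1 - (starRingEnd ℂ) (f₀ t) * f t) := by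
    intro f hf t
    rw [ContinuousMap.mul_apply, hinv _ (hUn f hf) t, div_eq_mul_inv]
    simp [hgt]
  have hSap : ∀ f : C(K, ℂ), ‖f‖ < 1 → ∀ t : K,
      ((f + f₀) * Ring.inverse (1 + g * f)) t
        = (f t + f₀ t) / (1 + (starRingEnd ℂ) (f₀ t) * f t) := by
    intro f hf t
    rw [ContinuousMap.mul_apply, hinv _ (hUp f hf) t, div_eq_mul_inv]
    simp [hgt]
  have hb : ∀ t, ‖f₀ t‖ < 1 := fun t => lt_of_le_of_lt (f₀.norm_coe_le_norm t) hf₀n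
  have hTmem : ∀ f : C(K, ℂ), ‖f‖ < 1 → ‖(f - f₀) * Ring.inverse (1 - g * f)‖ < 1 := by
    intro f hf
    refine cnorm_lt_one _ fun t => ?_
    rw [hTap f hf t]
    exact mob_lt (f₀ t) (f t) (hb t) (lt_of_le_of_lt (f.norm_coe_le_norm t) hf)
  have hSmem : ∀ f : C(K, ℂ), ‖f‖ < 1 → ‖(f + f₀) * Ring.inverse (1 + g * f)‖ < 1 := by
    intro f hf
    refine cnorm_lt_one _ fun t => ?_
    rw [hSap f hf t]
    have := mob_lt (-(f₀ t)) (f t) (by simpa using hb t)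
      (lt_of_le_of_lt (f.norm_coe_le_norm t) hf)
    simpa [sub_neg_eq_add, neg_mul] using this
  have hST : ∀ f : C(K, ℂ), ‖f‖ < 1 →
      (((f - f₀) * Ring.inverse (1 - g * f) + f₀)
        * Ring.inverse (1 + g * ((f - f₀) * Ring.inverse (1 - g * f)))) = f := by
    intro f hf
    ext t
    rw [hSap _ (hTmem f hf) t, hTap f hf t]
    exact mob_inv (f₀ t) (f t) (hb t) (lt_of_le_of_lt (f.norm_coe_le_norm t) hf)
  have hTS : ∀ f : C(K, ℂ), ‖f‖ < 1 →
      (((f + f₀) * Ring.inverse (1 + g * f) - f₀)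
        * Ring.inverse (1 - g * ((f + f₀) * Ring.inverse (1 + g * f)))) = f := by
    intro f hf
    ext t
    rw [hTap _ (hSmem f hf) t, hSap f hf t]
    have := mob_inv (-(f₀ t)) (f t) (by simpa using hb t)
      (lt_of_le_of_lt (f.norm_coe_le_norm t) hf)
    simpa [sub_neg_eq_add, neg_mul, ← sub_eq_add_neg] using this
  have hdT : ∀ f : C(K, ℂ), ‖f‖ < 1 →
      DifferentiableAt ℂ (fun h : C(K, ℂ) => (h - f₀) * Ring.inverse (1 - g * h)) f := by
    intro f hf
    have h1 : DifferentiableAt ℂ (fun h : C(K, ℂ) => h - f₀) f :=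
      differentiableAt_id.sub_const f₀
    have h2 : DifferentiableAt ℂ (fun h : C(K, ℂ) => 1 - g * h) f :=
      (differentiableAt_const _).sub ((differentiableAt_const g).mul differentiableAt_id)
    exact h1.mul (h2.inverse (hUn f hf))
  have hdS : ∀ f : C(K, ℂ), ‖f‖ < 1 →
      DifferentiableAt ℂ (fun h : C(K, ℂ) => (h + f₀) * Ring.inverse (1 + g * h)) f := by
    intro f hf
    have h1 : DifferentiableAt ℂ (fun h : C(K, ℂ) => h + f₀) f :=
      differentiableAt_id.add_const f₀
    have h2 : DifferentiableAt ℂ (fun h : C(K, ℂ) => 1 + g * h) f :=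
      (differentiableAt_const _).add ((differentiableAt_const g).mul differentiableAt_id)
    exact h1.mul (h2.inverse (hUp f hf))
  refine ⟨fun f => (f - f₀) * Ring.inverse (1 - g * f),
    fun f => (f + f₀) * Ring.inverse (1 + g * f),
    fun f hf t => hTap f (mem_ball_zero_iff.1 hf) t,
    fun f hf t => hSap f (mem_ball_zero_iff.1 hf) t,
    fun f hf => mem_ball_zero_iff.2 (hTmem f (mem_ball_zero_iff.1 hf)),
    fun f hf => hdT f (mem_ball_zero_iff.1 hf),
    Set.InvOn.bijOn ⟨fun f hf => hST f (mem_ball_zero_iff.1 hf),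
        fun f hf => hTS f (mem_ball_zero_iff.1 hf)⟩
      (fun f hf => mem_ball_zero_iff.2 (hTmem f (mem_ball_zero_iff.1 hf)))
      (fun f hf => mem_ball_zero_iff.2 (hSmem f (mem_ball_zero_iff.1 hf))),
    fun f hf => mem_ball_zero_iff.2 (hSmem f (mem_ball_zero_iff.1 hf)),
    fun f hf => hdS f (mem_ball_zero_iff.1 hf),
    fun f hf => hST f (mem_ball_zero_iff.1 hf),
    fun f hf => hTS f (mem_ball_zero_iff.1 hf),
    by
      show (f₀ - f₀) * Ring.inverse (1 - g * f₀) = 0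
      rw [sub_self, zero_mul]⟩
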